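/- arXiv:0904.0237 — 3 statements merged into one kernel-verified Lean document; each statement's English description precedes it below -/
import Mathlib

section
/- Let G be a group, r a natural number, and let S, S' : Fin r → G be two tuples whose images each generate G. Then the two (2r)-tuples obtained by appending r copies of the identity element of G to S and to S' respectively (i.e. the tuples Fin (r + r) → G equal to S on the first r coordinates and to 1 on the last r coordinates, and likewise for S') are Nielsen equivalent. -/
/-- An elementary Nielsen move on ordered `r`-tuples of elements of a group `G`:
inversion of one entry, permutation (swap) of two entries, or a twist replacing
`g_i` by `g_i * g_j` for some `j ≠ i`, all other entries being kept fixed. -/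
def NielsenMove {G : Type*} [Group G] {r : ℕ} (S S' : Fin r → G) : Prop :=
  (∃ i, S' i = (S i)⁻¹ ∧ ∀ k, k ≠ i → S' k = S k) ∨
  (∃ i j, i ≠ j ∧ S' i = S j ∧ S' j = S i ∧ ∀ k, k ≠ i → k ≠ j → S' k = S k) ∨
  (∃ i j, j ≠ i ∧ S' i = S i * S j ∧ ∀ k, k ≠ i → S' k = S k)

/-- Two tuples are Nielsen equivalent if they lie in the same class of the equivalence
relation generated by the elementary Nielsen moves. -/
def NielsenEquiv {G : Type*} [Group G] {r : ℕ} (S S' : Fin r → G) : Prop :=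
  Relation.EqvGen NielsenMove S S'

private lemma key {G : Type*} [Group G] {n : ℕ} (T : Fin n → G) (p : Fin n) {g : G}
    (hg : g ∈ Subgroup.closure (T '' {p}ᶜ)) :
    ∀ x, NielsenEquiv (Function.update T p x) (Function.update T p (x * g)) := by
  induction hg using Subgroup.closure_induction with
  | mem y hy =>
    obtain ⟨j, hj, rfl⟩ := hy
    have hjp : j ≠ p := hj
    intro x
    apply Relation.EqvGen.rel
    right; right
    refine ⟨p, j, hjp, ?_, ?_⟩
    · simp [Function.update_of_ne hjp]
    · intro k hk
      simp [Function.update_of_ne hk]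
  | one => intro x; simpa [NielsenEquiv] using Relation.EqvGen.refl _
  | mul a b ha hb iha ihb =>
    intro x
    have := (iha x).trans _ _ _ (ihb (x * a))
    simpa [NielsenEquiv, mul_assoc] using this
  | inv a ha iha =>
    intro x
    have := (iha (x * a⁻¹)).symm _ _
    simpa [NielsenEquiv] using this

private lemma update_equiv {G : Type*} [Group G] {n : ℕ} (T : Fin n → G) (p : Fin n)
    (htop : Subgroup.closure (T '' {p}ᶜ) = ⊤) (x y : G) :
    NielsenEquiv (Function.update T p x) (Function.update T p y) := by
  have := key T p (g := x⁻¹ * y) (htop ▸ Subgroup.mem_top _) x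
  simpa using this

private lemma equiv_of_agree {G : Type*} [Group G] {n : ℕ} (K : Set (Fin n))
    (T T' : Fin n → G)
    (hK : ∀ p ∈ K, T p = T' p)
    (htop : Subgroup.closure (T '' K) = ⊤) :
    NielsenEquiv T T' := by
  classical
  have main : ∀ (D : Finset (Fin n)) (T : Fin n → G),
      (∀ p ∈ K, T p = T' p) → Subgroup.closure (T '' K) = ⊤ →
      (∀ p, p ∉ D → T p = T' p) → NielsenEquiv T T' := by
    intro D
    induction D using Finset.induction with
    | empty =>
      intro T hK htop hD
      have : T = T' := funext fun p => hD p (by simp)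
      rw [this]; exact Relation.EqvGen.refl _
    | @insert a D' ha ih =>
      intro T hK htop hD
      by_cases haK : a ∈ K
      · exact ih T hK htop (fun p hp => by
          by_cases hpa : p = a
          · exact hpa ▸ hK a haK
          · exact hD p (by simp [hpa, hp]))
      · set U := Function.update T a (T' a) with hU
        have hstep : NielsenEquiv T U := by
          have h1 : Subgroup.closure (T '' {a}ᶜ) = ⊤ := by
            rw [eq_top_iff, ← htop]
            exact Subgroup.closure_mono (Set.image_mono (fun p hp => by
              simp only [Set.mem_compl_iff, Set.mem_singleton_iff]
              rintro rfl; exact haK hp))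
          have := update_equiv T a h1 (T a) (T' a)
          rwa [Function.update_eq_self] at this
        have hUK : ∀ p ∈ K, U p = T' p := fun p hp => by
          have hpa : p ≠ a := fun h => haK (by rwa [h] at hp)
          rw [hU, Function.update_of_ne hpa]; exact hK p hp
        have hUim : U '' K = T '' K := by
          apply Set.image_congr
          intro p hp
          exact (Function.update_of_ne (fun h => haK (by rwa [h] at hp)) _ _)
        refine hstep.trans _ _ _ (ih U hUK (by rw [hUim]; exact htop) ?_)
        intro p hp
        by_cases hpa : p = a
        · subst hpa; simp [hU]
        · rw [hU, Function.update_of_ne hpa]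
          exact hD p (by simp [hpa, hp])
  exact main Finset.univ T hK htop (fun p hp => absurd (Finset.mem_univ p) hp)

private lemma image_castAdd {G : Type*} {r : ℕ} (S T : Fin r → G) :
    (Fin.append S T) '' Set.range (Fin.castAdd r) = Set.range S := by
  rw [← Set.range_comp]
  have h : Fin.append S T ∘ Fin.castAdd r = S := funext fun i => Fin.append_left S T i
  rw [h]

private lemma image_natAdd {G : Type*} {r : ℕ} (S T : Fin r → G) :
    (Fin.append S T) '' Set.range (Fin.natAdd r) = Set.range T := by
  rw [← Set.range_comp]
  have h : Fin.append S T ∘ Fin.natAdd r = T := funext fun i => Fin.append_right S T i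
  rw [h]

/-- Any two generating `r`-tuples of a group become Nielsen equivalent after `r`
stabilizations, i.e. after appending `r` copies of the identity element to each. -/
theorem nielsenEquiv_after_stabilizations {G : Type*} [Group G] {r : ℕ}
    (S S' : Fin r → G)
    (hS : Subgroup.closure (Set.range S) = ⊤)
    (hS' : Subgroup.closure (Set.range S') = ⊤) :
    NielsenEquiv (Fin.append S (fun _ : Fin r => (1 : G))) (Fin.append S' (fun _ : Fin r => (1 : G))) := by
  have h1 : NielsenEquiv (Fin.append S (fun _ : Fin r => (1 : G))) (Fin.append S S') := by
    apply equiv_of_agree (Set.range (Fin.castAdd r))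
    · rintro p ⟨i, rfl⟩
      simp [Fin.append_left]
    · rw [image_castAdd]; exact hS
  have h2 : NielsenEquiv (Fin.append S S') (Fin.append S' S') := by
    apply equiv_of_agree (Set.range (Fin.natAdd r))
    · rintro p ⟨i, rfl⟩
      rw [Fin.append_right, Fin.append_right]
    · rw [image_natAdd]; exact hS'
  have h3 : NielsenEquiv (Fin.append S' S') (Fin.append S' (fun _ : Fin r => (1 : G))) := by
    apply equiv_of_agree (Set.range (Fin.castAdd r))
    · rintro p ⟨i, rfl⟩
      simp [Fin.append_left]
    · rw [image_castAdd]; exact hS'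
  exact (h1.trans _ _ _ h2).trans _ _ _ h3
end

section
/- Let g ≥ 2 and let G_g be the surface group of genus g, i.e. the presented group with generators x_1, …, x_{2g} and the single relator [x_1,x_2]·[x_3,x_4]⋯[x_{2g-1},x_{2g}]. If H is a proper subgroup of G_g of finite index, then the rank of H is strictly larger than 2g. -/
open scoped commutatorElement

/-- The relator of the genus-`g` surface group:
`[x_1,x_2]·[x_3,x_4]⋯[x_{2g-1},x_{2g}]`, the product of the commutators of the
consecutive pairs of free generators. -/
def surfaceRelator (g : ℕ) : FreeGroup (Fin (2 * g)) :=
  (List.ofFn fun i : Fin g =>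
    ⁅FreeGroup.of (⟨2 * i, by have := i.isLt; omega⟩ : Fin (2 * g)),
      FreeGroup.of (⟨2 * i + 1, by have := i.isLt; omega⟩ : Fin (2 * g))⁆).prod

/-- The surface group of genus `g`: the group presented with `2g` generators
`x_1, …, x_{2g}` and the single relator `[x_1,x_2]·[x_3,x_4]⋯[x_{2g-1},x_{2g}]`. -/
def SurfaceGroup (g : ℕ) : Type :=
  PresentedGroup ({surfaceRelator g} : Set (FreeGroup (Fin (2 * g))))

instance (g : ℕ) : Group (SurfaceGroup g) :=
  inferInstanceAs (Group (PresentedGroup _))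

instance (g : ℕ) : Group.FG (SurfaceGroup g) :=
  Group.fg_iff.mpr
    ⟨Set.range PresentedGroup.of, PresentedGroup.closure_range_of _, Set.finite_range _⟩

namespace SurfaceAux
section
variable {G : Type*} [Group G] (K : Subgroup G)
abbrev V := (G ⧸ K) → ℚ
def act (u : G) : V K →ₗ[ℚ] V K where
  toFun w := fun c => w (u⁻¹ • c)
  map_add' _ _ := rfl
  map_smul' _ _ := rfl
@[simp] lemma act_apply (u : G) (w : V K) (c : G ⧸ K) : act K u w c = w (u⁻¹ • c) := rfl
lemma act_mul (u v : G) (w : V K) : act K (u * v) w = act K u (act K v w) := by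
  funext c; simp [act, mul_smul]
lemma act_one (w : V K) : act K 1 w = w := by funext c; simp
def actAut : G →* MulAut (Multiplicative (V K)) where
  toFun u :=
    { toFun := fun w => Multiplicative.ofAdd (act K u w.toAdd)
      invFun := fun w => Multiplicative.ofAdd (act K u⁻¹ w.toAdd)
      left_inv := fun w => by simp [← act_mul]; simp [act_one]
      right_inv := fun w => by simp [← act_mul]; simp [act_one]
      map_mul' := fun w w' => by simp [ofAdd_add, map_add] }
  map_one' := by ext w; simp [act_one]
  map_mul' u v := by ext w; simp [act_mul]
@[simp] lemma actAut_apply (u : G) (w : Multiplicative (V K)) :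
    ((actAut K u) w).toAdd = act K u w.toAdd := rfl
end

section Free
variable {α : Type*} (L : Subgroup (FreeGroup α))
def theta (z : α → V L) :
    FreeGroup α →* (Multiplicative (V L) ⋊[actAut L] FreeGroup α) :=
  FreeGroup.lift fun i => ⟨Multiplicative.ofAdd (z i), FreeGroup.of i⟩
lemma theta_right (z : α → V L) (u : FreeGroup α) : (theta L z u).right = u := by
  have : (SemidirectProduct.rightHom.comp (theta L z)) = MonoidHom.id (FreeGroup α) := by
    apply FreeGroup.ext_hom
    intro i
    simp [theta, SemidirectProduct.rightHom]
  calc (theta L z u).right = (SemidirectProduct.rightHom.comp (theta L z)) u := rfl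
    _ = u := by rw [this]; rfl
def d (z : α → V L) (u : FreeGroup α) : V L := (theta L z u).left.toAdd
@[simp] lemma d_of (z : α → V L) (i : α) : d L z (FreeGroup.of i) = z i := by
  simp [d, theta]
@[simp] lemma d_pure (z : α → V L) (i : α) : d L z (pure i) = z i := d_of L z i
@[simp] lemma d_one (z : α → V L) : d L z 1 = 0 := by simp [d]
lemma d_mul (z : α → V L) (u v : FreeGroup α) :
    d L z (u * v) = d L z u + act L u (d L z v) := by
  have h : (theta L z (u * v)).left
      = (theta L z u).left * (actAut L (theta L z u).right) (theta L z v).left := by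
    rw [map_mul]; rfl
  have := congrArg Multiplicative.toAdd h
  rw [theta_right] at this
  simpa [d] using this
lemma d_inv (z : α → V L) (u : FreeGroup α) :
    d L z u⁻¹ = - act L u⁻¹ (d L z u) := by
  have h := d_mul L z u⁻¹ u
  simp only [inv_mul_cancel, d_one] at h
  have := congrArg (fun x => x - act L u⁻¹ (d L z u)) h.symm
  simpa [add_sub_cancel_right, sub_eq_neg_add] using this
lemma d_zadd (z z' : α → V L) (u : FreeGroup α) :
    d L z u + d L z' u = d L (z + z') u := by
  induction u using FreeGroup.induction_on with
  | C1 => simp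
  | of i => simp only [d_pure, d_of, Pi.add_apply]
  | inv_of i h =>
      simp only [d_inv]
      rw [← neg_add, ← map_add, h]
  | mul x y hx hy =>
      simp only [d_mul, ← hx, ← hy, map_add]
      abel
lemma d_zsmul (c : ℚ) (z : α → V L) (u : FreeGroup α) :
    c • d L z u = d L (c • z) u := by
  induction u using FreeGroup.induction_on with
  | C1 => simp
  | of i => simp only [d_pure, d_of, Pi.smul_apply]
  | inv_of i h =>
      simp only [d_inv]
      rw [smul_neg, ← map_smul, h]
  | mul x y hx hy =>
      simp only [d_mul, ← hx, ← hy, map_smul, smul_add]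
def D (u : FreeGroup α) : (α → V L) →ₗ[ℚ] V L where
  toFun z := d L z u
  map_add' z z' := (d_zadd L z z' u).symm
  map_smul' c z := (d_zsmul L c z u).symm
@[simp] lemma D_apply (u : FreeGroup α) (z : α → V L) : D L u z = d L z u := rfl
end Free

open Subgroup

theorem main_lemma {α : Type*} [Fintype α] (r : FreeGroup α)
    (Q : Subgroup (PresentedGroup ({r} : Set (FreeGroup α)))) [Group.FG Q]
    (hi : Q.index ≠ 0) :
    Q.index * Fintype.card α + 1 ≤ 2 * Q.index + Group.rank Q := by
  classical
  let π : FreeGroup α →* PresentedGroup ({r} : Set (FreeGroup α)) := PresentedGroup.mk _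
  have hπsurj : Function.Surjective π := PresentedGroup.mk_surjective _
  have hker : π.ker = Subgroup.normalClosure {r} := by
    ext x
    rw [MonoidHom.mem_ker]
    exact QuotientGroup.eq_one_iff x
  let K : Subgroup (FreeGroup α) := Q.comap π
  have hKindex : K.index = Q.index := Subgroup.index_comap_of_surjective Q hπsurj
  haveI : K.FiniteIndex := ⟨by rw [hKindex]; exact hi⟩
  haveI : Finite (FreeGroup α ⧸ K) := Subgroup.finite_quotient_of_finiteIndex
  haveI := Fintype.ofFinite (FreeGroup α ⧸ K)
  have hNK : π.ker ≤ K := by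
    intro x hx
    simp only [K, Subgroup.mem_comap, MonoidHom.mem_ker.mp hx]
    exact Q.one_mem
  -- basepoint
  let c₀ : FreeGroup α ⧸ K := QuotientGroup.mk 1
  have smul_mk : ∀ (u v : FreeGroup α),
      u • (QuotientGroup.mk v : FreeGroup α ⧸ K) = QuotientGroup.mk (u * v) :=
    fun u v => rfl
  have smul_c₀ : ∀ u : FreeGroup α, u ∈ K → u • c₀ = c₀ := by
    intro u hu
    rw [show c₀ = QuotientGroup.mk 1 from rfl, smul_mk, QuotientGroup.eq]
    simpa using inv_mem hu
  have smul_c₀' : ∀ u : FreeGroup α, u • c₀ = c₀ → u ∈ K := by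
    intro u hu
    rw [show c₀ = QuotientGroup.mk 1 from rfl, smul_mk, QuotientGroup.eq] at hu
    simpa using hu
  -- generators of Q and their lifts
  obtain ⟨S, hScard, hSclos⟩ := Group.rank_spec Q
  have hlift : ∀ q : Q, ∃ f : FreeGroup α, π f = (q : PresentedGroup ({r} : Set (FreeGroup α))) :=
    fun q => hπsurj _
  choose k hk using hlift
  have hkK : ∀ q : Q, k q ∈ K := by
    intro q
    simp only [K, Subgroup.mem_comap, hk]
    exact q.2
  -- the linear maps
  let R : (α → V K) →ₗ[ℚ] V K := D K r
  let Ψ : (α → V K) →ₗ[ℚ] (↥S → ℚ) :=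
    LinearMap.pi (fun q => LinearMap.proj c₀ ∘ₗ D K (k ↑q))
  let β : V K →ₗ[ℚ] (α → V K) :=
    LinearMap.pi (fun i => act K (FreeGroup.of i) - LinearMap.id)
  -- the key claim
  have key : ∀ z : α → V K, d K z r = 0 → (∀ q : ↥S, d K z (k ↑q) c₀ = 0) →
      z ∈ LinearMap.range β := by
    intro z hzr hzk
    let M : Subgroup (FreeGroup α) :=
      { carrier := {u | u ∈ K ∧ d K z u c₀ = 0}
        one_mem' := ⟨K.one_mem, by simp⟩
        mul_mem' := by
          rintro a b ⟨haK, ha⟩ ⟨hbK, hb⟩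
          refine ⟨K.mul_mem haK hbK, ?_⟩
          have h1 := congrFun (d_mul K z a b) c₀
          simp only [Pi.add_apply, act_apply] at h1
          rw [smul_c₀ _ (inv_mem haK), hb, ha] at h1
          simpa using h1
        inv_mem' := by
          rintro a ⟨haK, ha⟩
          refine ⟨K.inv_mem haK, ?_⟩
          have h1 := congrFun (d_inv K z a) c₀
          simp only [Pi.neg_apply, act_apply] at h1
          rw [inv_inv, smul_c₀ _ haK, ha] at h1
          simpa using h1 }
    have hMK : M ≤ K := fun u hu => hu.1
    have hNM : Subgroup.normalClosure {r} ≤ M := by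
      refine (Subgroup.closure_le M).2 ?_
      intro x hx
      rcases Group.mem_conjugatesOfSet_iff.1 hx with ⟨a, ha, hconj⟩
      rw [Set.mem_singleton_iff] at ha
      rw [ha] at hconj
      rcases isConj_iff.1 hconj with ⟨c, rfl⟩
      have hxK : c * r * c⁻¹ ∈ K := by
        apply hNK
        rw [hker]
        exact Subgroup.conjugatesOfSet_subset_normalClosure hx
      refine ⟨hxK, ?_⟩
      have hd : d K z (c * r * c⁻¹) = d K z c - act K (c * r * c⁻¹) (d K z c) := by
        rw [d_mul, d_mul, hzr, d_inv]
        simp only [map_zero, add_zero, map_neg, ← act_mul, sub_eq_add_neg]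
      have h1 := congrFun hd c₀
      simp only [Pi.sub_apply, act_apply] at h1
      rw [smul_c₀ _ (inv_mem hxK)] at h1
      simpa using h1
    have hkerM : π.ker ≤ M := hker ▸ hNM
    have hKM : K = M := by
      have hmap : Subgroup.map π M = Q := by
        apply le_antisymm
        · rintro x ⟨u, hu, rfl⟩
          exact hu.1
        · have hQeq : Subgroup.closure (Q.subtype '' ↑S) = Q := by
            rw [← MonoidHom.map_closure, hSclos, ← MonoidHom.range_eq_map,
              Subgroup.subtype_range]
          rw [← hQeq]
          refine (Subgroup.closure_le _).2 ?_
          rintro x ⟨q, hq, rfl⟩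
          exact ⟨k q, ⟨hkK q, hzk ⟨q, hq⟩⟩, hk q⟩
      calc K = Q.comap π := rfl
        _ = (Subgroup.map π M).comap π := by rw [hmap]
        _ = M ⊔ π.ker := Subgroup.comap_map_eq π M
        _ = M := sup_eq_left.mpr hkerM
    have hMmem : ∀ u : FreeGroup α, u ∈ K → d K z u c₀ = 0 := by
      intro u hu
      exact (hKM ▸ hu).2
    -- construct the primitive
    let t : (FreeGroup α ⧸ K) → FreeGroup α := Quotient.out
    have ht : ∀ c : FreeGroup α ⧸ K, (t c) • c₀ = c := by
      intro c
      show (t c) • (QuotientGroup.mk 1 : FreeGroup α ⧸ K) = c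
      rw [smul_mk, mul_one]
      exact QuotientGroup.out_eq' c
    let v : V K := fun c => d K z (t c)⁻¹ c₀
    have htinv : ∀ c : FreeGroup α ⧸ K, (t c)⁻¹ • c = c₀ := by
      intro c
      rw [inv_smul_eq_iff]
      exact (ht c).symm
    have hvc : ∀ c, d K z (t c) c = - v c := by
      intro c
      have h0 := congrFun (d_mul K z (t c) (t c)⁻¹) c
      rw [mul_inv_cancel] at h0
      simp only [d_one, Pi.zero_apply, Pi.add_apply, act_apply] at h0
      rw [htinv c] at h0
      have : v c = d K z (t c)⁻¹ c₀ := rfl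
      linarith [h0]
    have hdv : ∀ (u : FreeGroup α) (c : FreeGroup α ⧸ K),
        d K z u c = v (u⁻¹ • c) - v c := by
      intro u c
      have hk₀ : (t c)⁻¹ * u * t (u⁻¹ • c) ∈ K := by
        apply smul_c₀'
        rw [mul_smul, mul_smul, ht (u⁻¹ • c), smul_inv_smul, htinv c]
      have h0 : d K z ((t c)⁻¹ * u * t (u⁻¹ • c)) c₀ = 0 := hMmem _ hk₀
      have he1 := congrFun (d_mul K z ((t c)⁻¹ * u) (t (u⁻¹ • c))) c₀
      have he2 := congrFun (d_mul K z (t c)⁻¹ u) c₀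
      simp only [Pi.add_apply, act_apply] at he1 he2
      have hc1 : ((t c)⁻¹)⁻¹ • c₀ = c := by rw [inv_inv]; exact ht c
      have hc2 : ((t c)⁻¹ * u)⁻¹ • c₀ = u⁻¹ • c := by
        rw [mul_inv_rev, inv_inv, mul_smul, ht c]
      rw [hc2] at he1
      rw [hc1] at he2
      have hv1 : d K z (t (u⁻¹ • c)) (u⁻¹ • c) = - v (u⁻¹ • c) := hvc (u⁻¹ • c)
      have hv2 : d K z (t c)⁻¹ c₀ = v c := rfl
      rw [he2, hv1, hv2] at he1
      rw [he1] at h0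
      linarith
    refine ⟨v, ?_⟩
    funext i
    funext c
    have h1 : β v i c = v ((FreeGroup.of i)⁻¹ • c) - v c := rfl
    rw [h1, ← hdv (FreeGroup.of i) c, d_of]
  -- coboundary bound
  have hβ1 : β (fun _ => (1 : ℚ)) = 0 := by
    funext i
    funext c
    show act K (FreeGroup.of i) (fun _ => (1:ℚ)) c - (fun _ => (1:ℚ)) c = 0
    simp
  have hone_ne : (fun _ => (1 : ℚ)) ≠ (0 : V K) := by
    intro h
    exact one_ne_zero (congrFun h c₀)
  -- dimension bookkeeping
  have hVrank : Module.finrank ℚ (V K) = Q.index := by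
    rw [Module.finrank_fintype_fun_eq_card, ← Nat.card_eq_fintype_card, ← hKindex]
    rfl
  have hZrank : Module.finrank ℚ (α → V K) = Fintype.card α * Q.index := by
    rw [Module.finrank_pi_fintype ℚ]
    simp [hVrank, Finset.sum_const, mul_comm]
  have hR := LinearMap.finrank_range_add_finrank_ker R
  rw [hZrank] at hR
  have hRrange : Module.finrank ℚ (LinearMap.range R) ≤ Q.index :=
    hVrank ▸ (LinearMap.range R).finrank_le
  set Ψ' := Ψ.domRestrict (LinearMap.ker R) with hΨ'def
  have hΨ := LinearMap.finrank_range_add_finrank_ker Ψ'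
  have hΨrange : Module.finrank ℚ (LinearMap.range Ψ') ≤ S.card := by
    have h := (LinearMap.range Ψ').finrank_le
    rwa [Module.finrank_fintype_fun_eq_card, Fintype.card_coe] at h
  have hβrk := LinearMap.finrank_range_add_finrank_ker β
  rw [hVrank] at hβrk
  have hβker : 1 ≤ Module.finrank ℚ (LinearMap.ker β) := by
    refine Nat.pos_of_ne_zero fun h0 => hone_ne ?_
    have hbot : LinearMap.ker β = ⊥ := Submodule.finrank_eq_zero.1 h0
    have hmem : (fun _ => (1 : ℚ)) ∈ LinearMap.ker β := LinearMap.mem_ker.2 hβ1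
    rw [hbot, Submodule.mem_bot] at hmem
    exact hmem
  have hkerΨ' : Module.finrank ℚ (LinearMap.ker Ψ') ≤ Module.finrank ℚ (LinearMap.range β) := by
    rw [← Submodule.finrank_map_subtype_eq]
    apply Submodule.finrank_mono
    rintro x ⟨y, hy, rfl⟩
    apply key
    · have := y.2
      rw [LinearMap.mem_ker] at this
      exact this
    · intro q
      have h := congrFun (LinearMap.mem_ker.1 hy) q
      exact h
  rw [← hScard]
  have hZ' : Q.index * Fintype.card α = Module.finrank ℚ (α → V K) := by
    rw [hZrank, mul_comm]
  rw [hZ', ← hZrank] at *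
  omega

end SurfaceAux

theorem pres_version (g : ℕ) (hg : 2 ≤ g)
    (Q : Subgroup (PresentedGroup ({surfaceRelator g} : Set (FreeGroup (Fin (2 * g))))))
    (hprop : Q ≠ ⊤) (hindex : Q.index ≠ 0) [Group.FG Q] :
    2 * g < Group.rank Q := by
  have hmain := SurfaceAux.main_lemma (surfaceRelator g) Q hindex
  rw [Fintype.card_fin] at hmain
  have hne1 : Q.index ≠ 1 := fun h => hprop (Subgroup.index_eq_one.mp h)
  have hn2 : 2 ≤ Q.index := by omega
  set n := Q.index with hn
  set s := Group.rank ↥Q with hs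
  have e3 : n * (2 * g) = n * (2 * g - 2) + n * 2 := by
    rw [← Nat.mul_add]
    congr 1
    omega
  have e2 : 2 * (2 * g - 2) ≤ n * (2 * g - 2) := Nat.mul_le_mul_right _ hn2
  omega


/-- For `g ≥ 2`, every proper finite index subgroup of the genus-`g` surface group
has rank strictly larger than `2g`. (The subgroup is finitely generated by
Schreier's lemma, which provides the `Group.FG` instance needed to speak of its
rank.) -/
theorem surfaceGroup_rank_finiteIndex_subgroup (g : ℕ) (hg : 2 ≤ g)
    (H : Subgroup (SurfaceGroup g)) (hprop : H ≠ ⊤) (hindex : H.index ≠ 0) :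
    2 * g <
      @Group.rank H _ (@Subgroup.fg_of_index_ne_zero _ _ H _ ⟨hindex⟩) := by
  exact @pres_version g hg H hprop hindex (@Subgroup.fg_of_index_ne_zero _ _ H _ ⟨hindex⟩)
end

section
/- Let (F, d) be a nonempty connected metric space equipped with a Borel measure μ, and let ε > 0 and c > 0 be such that μ(B(x, ε)) ≥ c for every x ∈ F, where B(x, ε) is the open ball of radius ε around x, and such that μ(F) < ∞. Then the diameter of F is at most 4·ε·μ(F)/c. -/
open MeasureTheory Metric

/-- The packing argument behind the bounded diameter lemma for minimal surfaces:
if `F` is a nonempty connected metric space carrying a Borel measure `μ` of finite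
total mass such that every open ball of radius `ε` has measure at least `c > 0`,
then the diameter of `F` is at most `4·ε·μ(F)/c`. -/
theorem diam_le_of_measure_ball_ge {F : Type*} [MetricSpace F]
    [MeasurableSpace F] [BorelSpace F] [Nonempty F] [ConnectedSpace F]
    (μ : Measure F) (ε c : ℝ) (hε : 0 < ε) (hc : 0 < c)
    (hball : ∀ x : F, ENNReal.ofReal c ≤ μ (ball x ε))
    (hfin : μ Set.univ < ⊤) :
    diam (Set.univ : Set F) ≤ 4 * ε * (μ Set.univ).toReal / c := by
  have h2ε : (0:ℝ) < 2 * ε := by linarith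
  have hμ0 : 0 ≤ (μ Set.univ).toReal := ENNReal.toReal_nonneg
  have key : ∀ x y : F, dist x y ≤ 4 * ε * (μ Set.univ).toReal / c := by
    intro x y
    -- the chain property
    set P : F → ℕ → Prop := fun w n => ∃ z : ℕ → F, z 0 = x ∧ z n = w ∧
      ∀ i < n, dist (z i) (z (i+1)) < 2 * ε with hP
    -- chain connectivity from connectedness
    have hchain : ∀ w : F, ∃ n, P w n := by
      set S : Set F := {w : F | ∃ n, P w n} with hS
      have hopen : IsOpen S := by
        rw [isOpen_iff]
        rintro w ⟨n, z, h0, hn, hlt⟩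
        refine ⟨2 * ε, h2ε, fun w' hw' => ?_⟩
        refine ⟨n + 1, fun k => if k ≤ n then z k else w', ?_, ?_, ?_⟩
        · simp [h0]
        · simp
        · intro i hi
          rcases lt_or_ge i n with h | h
          · simp only [if_pos h.le, if_pos (Nat.succ_le_of_lt h)]
            exact hlt i h
          · have hin : i = n := by omega
            have c1 : i ≤ n := by omega
            have c2 : ¬ (i + 1 ≤ n) := by omega
            simp only [if_pos c1, if_neg c2]
            rw [hin, hn, dist_comm]
            exact mem_ball.mp hw'
      have hclosed : IsClosed S := by
        rw [← isOpen_compl_iff, isOpen_iff]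
        intro w hw
        refine ⟨2 * ε, h2ε, fun w' hw' => ?_⟩
        intro hw'S
        apply hw
        rcases hw'S with ⟨n, z, h0, hn, hlt⟩
        refine ⟨n + 1, fun k => if k ≤ n then z k else w, ?_, ?_, ?_⟩
        · simp [h0]
        · simp
        · intro i hi
          rcases lt_or_ge i n with h | h
          · simp only [if_pos h.le, if_pos (Nat.succ_le_of_lt h)]
            exact hlt i h
          · have hin : i = n := by omega
            have c1 : i ≤ n := by omega
            have c2 : ¬ (i + 1 ≤ n) := by omega
            simp only [if_pos c1, if_neg c2]
            rw [hin, hn]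
            exact mem_ball.mp hw'
      have hne : S.Nonempty := ⟨x, 0, fun _ => x, rfl, rfl, by omega⟩
      have huniv := (isClopen_iff.mp ⟨hclosed, hopen⟩).resolve_left
        (Set.nonempty_iff_ne_empty.mp hne)
      intro w
      have hw : w ∈ S := huniv ▸ Set.mem_univ w
      exact hw
    have hPy : ∃ n, P y n := hchain y
    classical
    obtain ⟨z, hz0, hzn, hzlt⟩ := Nat.find_spec hPy
    set n := Nat.find hPy with hn
    -- separation: far-apart indices are 2ε-separated
    have hsep : ∀ i j, i + 2 ≤ j → j ≤ n → 2 * ε ≤ dist (z i) (z j) := by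
      intro i j hij hjn
      by_contra hlt
      push_neg at hlt
      have hm : n - (j - i - 1) < n := by omega
      apply Nat.find_min hPy hm
      refine ⟨fun k => if k ≤ i then z k else z (k + (j - i - 1)), by simp [hz0], ?_, ?_⟩
      · have h1 : ¬ (n - (j - i - 1) ≤ i) := by omega
        have h2 : n - (j - i - 1) + (j - i - 1) = n := by omega
        simp only [if_neg h1, h2]
        exact hzn
      · intro k hk
        rcases lt_or_ge k i with h | h
        · simp only [if_pos h.le, if_pos (Nat.succ_le_of_lt h)]
          exact hzlt k (by omega)
        · rcases eq_or_lt_of_le h with h' | h'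
          · have c1 : k ≤ i := by omega
            have c2 : ¬ (k + 1 ≤ i) := by omega
            have c3 : k + 1 + (j - i - 1) = j := by omega
            have c4 : z k = z i := by rw [h']
            simp only [if_pos c1, if_neg c2, c3, c4]
            exact hlt
          · have c1 : ¬ (k ≤ i) := by omega
            have c2 : ¬ (k + 1 ≤ i) := by omega
            have c3 : k + 1 + (j - i - 1) = k + (j - i - 1) + 1 := by omega
            simp only [if_neg c1, if_neg c2, c3]
            exact hzlt (k + (j - i - 1)) (by omega)
    -- disjoint balls at even indices
    have aux : ∀ k l : ℕ, k < l → l < n / 2 + 1 →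
        Disjoint (ball (z (2 * k)) ε) (ball (z (2 * l)) ε) := by
      intro k l h hl
      rw [Set.disjoint_left]
      intro u hu hu'
      have hd : 2 * ε ≤ dist (z (2 * k)) (z (2 * l)) :=
        hsep (2 * k) (2 * l) (by omega) (by omega)
      have hlt2 : dist (z (2 * k)) (z (2 * l)) < 2 * ε := by
        calc dist (z (2 * k)) (z (2 * l)) ≤ dist (z (2 * k)) u + dist u (z (2 * l)) :=
              dist_triangle _ _ _
          _ < ε + ε := by
              rw [mem_ball] at hu hu'
              rw [dist_comm (z (2*k)) u]
              exact add_lt_add hu hu'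
          _ = 2 * ε := by ring
      linarith
    have hdisj : (↑(Finset.range (n / 2 + 1)) : Set ℕ).PairwiseDisjoint
        (fun k => ball (z (2 * k)) ε) := by
      intro k hk l hl hkl
      simp only [Finset.coe_range, Set.mem_Iio] at hk hl
      rcases lt_or_gt_of_ne hkl with h | h
      · exact aux k l h hl
      · exact (aux l k h hk).symm
    -- measure count
    have hcount : ((n / 2 + 1 : ℕ) : ENNReal) * ENNReal.ofReal c ≤ μ Set.univ := by
      calc ((n / 2 + 1 : ℕ) : ENNReal) * ENNReal.ofReal c
          = ∑ _k ∈ Finset.range (n / 2 + 1), ENNReal.ofReal c := by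
            simp [Finset.sum_const, nsmul_eq_mul]
        _ ≤ ∑ k ∈ Finset.range (n / 2 + 1), μ (ball (z (2 * k)) ε) :=
            Finset.sum_le_sum fun k _ => hball _
        _ = μ (⋃ k ∈ Finset.range (n / 2 + 1), ball (z (2 * k)) ε) :=
            (measure_biUnion_finset hdisj fun _ _ => measurableSet_ball).symm
        _ ≤ μ Set.univ := measure_mono (Set.subset_univ _)
    have hcR : ((n / 2 + 1 : ℕ) : ℝ) * c ≤ (μ Set.univ).toReal := by
      have h := ENNReal.toReal_mono hfin.ne hcount
      rw [ENNReal.toReal_mul, ENNReal.toReal_ofReal hc.le, ENNReal.toReal_natCast] at h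
      simpa using h
    -- conclude
    have hsum : dist x y ≤ (n : ℝ) * (2 * ε) := by
      rw [← hz0, ← hzn]
      calc dist (z 0) (z n) ≤ ∑ i ∈ Finset.range n, dist (z i) (z (i+1)) :=
            dist_le_range_sum_dist z n
        _ ≤ ∑ _i ∈ Finset.range n, (2 * ε) :=
            Finset.sum_le_sum fun i hi => (hzlt i (Finset.mem_range.mp hi)).le
        _ = (n : ℝ) * (2 * ε) := by simp [Finset.sum_const, nsmul_eq_mul]
    have hnat : (n : ℝ) ≤ 2 * ((n / 2 + 1 : ℕ) : ℝ) := by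
      have : n ≤ 2 * (n / 2 + 1) := by omega
      exact_mod_cast this
    have h1 : (n : ℝ) * (2 * ε) ≤ 4 * ε * ((n / 2 + 1 : ℕ) : ℝ) := by nlinarith
    have h2 : ((n / 2 + 1 : ℕ) : ℝ) ≤ (μ Set.univ).toReal / c := by
      rw [le_div_iff₀ hc]; exact hcR
    calc dist x y ≤ (n : ℝ) * (2 * ε) := hsum
      _ ≤ 4 * ε * ((n / 2 + 1 : ℕ) : ℝ) := h1
      _ ≤ 4 * ε * ((μ Set.univ).toReal / c) := by nlinarith
      _ = 4 * ε * (μ Set.univ).toReal / c := by ring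
  have hC : 0 ≤ 4 * ε * (μ Set.univ).toReal / c :=
    div_nonneg (by nlinarith) hc.le
  exact diam_le_of_forall_dist_le hC fun a _ b _ => key a b
end
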